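/- Let C ∈ GL⁺(U). A family {Λ_w : w ∈ Ω} of adjointable operators is a continuous *-g-frame for U if and only if it is a (C,C)-controlled continuous *-g-frame for U. Moreover, if {Λ_w} is a (C,C)-controlled continuous *-g-frame with bounds A₀, B₀ then it is a continuous *-g-frame with bounds A₀‖C‖⁻¹ and B₀‖C⁻¹‖, and conversely if it is a continuous *-g-frame with bounds A₀, B₀ then it is (C,C)-controlled with bounds A₀‖C⁻¹‖⁻¹ and B₀‖C‖. -/

import Mathlib

open MeasureTheory
open scoped ComplexOrder RightActions

noncomputable section

/-- The class `CStarModule` as it stood in the older Mathlib (right action of `Aᵐᵒᵖ`). -/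
class CStarModuleOld (A E : Type*) [NonUnitalSemiring A] [StarRing A]
    [Module ℂ A] [AddCommGroup E] [Module ℂ E] [PartialOrder A] [SMul Aᵐᵒᵖ E] [Norm A] [Norm E]
    extends Inner A E where
  inner_add_right {x} {y} {z} : inner x (y + z) = inner x y + inner x z
  inner_self_nonneg {x} : 0 ≤ inner x x
  inner_self {x} : inner x x = 0 ↔ x = 0
  inner_op_smul_right {a : A} {x y : E} : inner x (y <• a) = inner x y * a
  inner_smul_right_complex {z : ℂ} {x} {y} : inner x (z • y) = z • inner x y
  star_inner x y : star (inner x y) = inner y x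
  norm_eq_sqrt_norm_inner_self x : ‖x‖ = √‖inner x x‖

namespace CStarModuleOld

variable {A : Type*} [CStarAlgebra A] [PartialOrder A] [StarOrderedRing A]
  {U : Type*} [NormedAddCommGroup U] [NormedSpace ℂ U] [SMul Aᵐᵒᵖ U] [CStarModuleOld A U]

lemma inner_zero_right' (x : U) : inner A x (0 : U) = 0 := by
  have h := CStarModuleOld.inner_add_right (A := A) (x := x) (y := (0 : U)) (z := 0)
  rw [add_zero] at h
  exact (left_eq_add.mp h)

@[simp] lemma inner_zero_left (x : U) : inner A (0 : U) x = 0 := by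
  rw [← CStarModuleOld.star_inner (A := A) x (0 : U), inner_zero_right', star_zero]

lemma inner_neg_right' (x y : U) : inner A x (-y) = -inner A x y := by
  have h := CStarModuleOld.inner_add_right (A := A) (x := x) (y := y) (z := -y)
  rw [add_neg_cancel, inner_zero_right'] at h
  exact (neg_eq_of_add_eq_zero_right h.symm).symm

lemma inner_sub_right (x y z : U) : inner A x (y - z) = inner A x y - inner A x z := by
  rw [sub_eq_add_neg, CStarModuleOld.inner_add_right, inner_neg_right', ← sub_eq_add_neg]

lemma inner_sub_left (x y z : U) : inner A (x - y) z = inner A x z - inner A y z := by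
  rw [← CStarModuleOld.star_inner (A := A) z (x - y), inner_sub_right, star_sub,
    CStarModuleOld.star_inner, CStarModuleOld.star_inner]

lemma isSelfAdjoint_inner_self {x : U} : IsSelfAdjoint (inner A x x) :=
  CStarModuleOld.star_inner x x

lemma norm_sq_eq {x : U} : ‖x‖ ^ 2 = ‖inner A x x‖ := by
  rw [CStarModuleOld.norm_eq_sqrt_norm_inner_self (A := A) x, Real.sq_sqrt (norm_nonneg _)]

lemma inner_smul_right_real {r : ℝ} {x y : U} : inner A x (r • y) = r • inner A x y := by
  have h := CStarModuleOld.inner_smul_right_complex (A := A) (z := (r : ℂ)) (x := x) (y := y)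
  simp only [Complex.coe_smul] at h
  exact h

lemma inner_smul_left_real {r : ℝ} {x y : U} : inner A (r • x) y = r • inner A x y := by
  rw [← CStarModuleOld.star_inner (A := A) y (r • x), inner_smul_right_real, star_smul,
    star_trivial, CStarModuleOld.star_inner]

end CStarModuleOld

section Helpers

variable {A : Type*} [CStarAlgebra A] [PartialOrder A] [StarOrderedRing A]
  {U : Type*} [NormedAddCommGroup U] [NormedSpace ℂ U] [SMul Aᵐᵒᵖ U] [CStarModuleOld A U]

lemma key_contract (T : U →L[ℂ] U) (hT : ∀ x y : U, (inner A (T x) y : A) = inner A x (T y))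
    (hTn : ‖T‖ ≤ 1) (x : U) : (inner A (T x) (T x) : A) ≤ inner A x x := by
  set c : ℕ → A := fun j => inner A ((T ^ j) x) ((T ^ j) x) with hc
  have hpow : ∀ j : ℕ, (T ^ (j + 1)) x = T ((T ^ j) x) := by
    intro j; rw [pow_succ']; rfl
  have hmidL : ∀ j : ℕ, (inner A ((T ^ (j + 2)) x) ((T ^ j) x) : A) = c (j + 1) := by
    intro j
    rw [show (j : ℕ) + 2 = (j + 1) + 1 from rfl, hpow (j + 1), hT, ← hpow j]
  have hmidR : ∀ j : ℕ, (inner A ((T ^ j) x) ((T ^ (j + 2)) x) : A) = c (j + 1) := by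
    intro j
    rw [show (j : ℕ) + 2 = (j + 1) + 1 from rfl, hpow (j + 1), ← hT, ← hpow j]
  have hconv : ∀ j : ℕ, c (j + 1) - c j ≤ c (j + 2) - c (j + 1) := by
    intro j
    have h0 : (0 : A) ≤ inner A ((T ^ (j + 2)) x - (T ^ j) x) ((T ^ (j + 2)) x - (T ^ j) x) :=
      CStarModuleOld.inner_self_nonneg
    simp only [CStarModuleOld.inner_sub_left, CStarModuleOld.inner_sub_right, hmidL, hmidR] at h0
    rw [← sub_nonneg]
    exact h0
  have hmono : ∀ j : ℕ, c 1 - c 0 ≤ c (j + 1) - c j := by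
    intro j
    induction j with
    | zero => exact le_rfl
    | succ n ih => exact ih.trans (hconv n)
  have htel : ∀ N : ℕ, N • (c 1 - c 0) ≤ c N - c 0 := by
    intro N
    calc N • (c 1 - c 0) = ∑ _j ∈ Finset.range N, (c 1 - c 0) := by simp [mul_sub]
    _ ≤ ∑ j ∈ Finset.range N, (c (j + 1) - c j) := Finset.sum_le_sum fun j _ => hmono j
    _ = c N - c 0 := Finset.sum_range_sub c N
  have hone : (0 : A) ≤ 1 := by simpa using star_mul_self_nonneg (1 : A)
  have hcN : ∀ N : ℕ, c N ≤ ‖x‖ ^ 2 • (1 : A) := by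
    intro N
    have h1 : c N ≤ algebraMap ℝ A ‖c N‖ :=
      IsSelfAdjoint.le_algebraMap_norm_self CStarModuleOld.isSelfAdjoint_inner_self
    rw [Algebra.algebraMap_eq_smul_one] at h1
    refine h1.trans ?_
    rw [← sub_nonneg, ← sub_smul]
    have h2 : ‖c N‖ ≤ ‖x‖ ^ 2 := by
      rw [hc]
      rw [← CStarModuleOld.norm_sq_eq]
      have h3 : ‖(T ^ N) x‖ ≤ ‖x‖ := by
        rcases Nat.eq_zero_or_pos N with hN | hN
        · subst hN; simp
        · calc ‖(T ^ N) x‖ ≤ ‖T ^ N‖ * ‖x‖ := (T ^ N).le_opNorm x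
          _ ≤ ‖T‖ ^ N * ‖x‖ := by
              gcongr
              exact norm_pow_le' T hN
          _ ≤ 1 * ‖x‖ := by
              gcongr
              exact pow_le_one₀ (norm_nonneg T) hTn
          _ = ‖x‖ := one_mul _
      exact pow_le_pow_left₀ (norm_nonneg _) h3 2
    have := smul_le_smul_of_nonneg_left hone (sub_nonneg.mpr h2)
    simpa using this
  have hd : c 1 - c 0 ≤ 0 := by
    have h9 : Filter.Tendsto (fun N : ℕ => (‖x‖ ^ 2 / ((N : ℝ) + 1) : ℝ)) Filter.atTop (nhds 0) := by
      apply Filter.Tendsto.div_atTop tendsto_const_nhds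
      exact Filter.tendsto_atTop_add_const_right _ 1 tendsto_natCast_atTop_atTop
    have hten : Filter.Tendsto (fun N : ℕ => (‖x‖ ^ 2 / ((N : ℝ) + 1)) • (1 : A))
        Filter.atTop (nhds 0) := by
      simpa using h9.smul_const (1 : A)
    refine ge_of_tendsto' hten fun N => ?_
    have h6 : (N + 1) • (c 1 - c 0) ≤ ‖x‖ ^ 2 • (1 : A) := by
      refine (htel (N + 1)).trans (le_trans ?_ (hcN (N + 1)))
      exact sub_le_self _ CStarModuleOld.inner_self_nonneg
    have h7 : (((N : ℝ) + 1)) • (c 1 - c 0) ≤ ‖x‖ ^ 2 • (1 : A) := by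
      have : (((N + 1 : ℕ) : ℝ)) • (c 1 - c 0) = (N + 1) • (c 1 - c 0) :=
        Nat.cast_smul_eq_nsmul ℝ _ _
      rw [show ((N : ℝ) + 1) = ((N + 1 : ℕ) : ℝ) by push_cast; ring, this]
      exact h6
    have hpos : (0 : ℝ) < (N : ℝ) + 1 := by positivity
    have h8 := smul_le_smul_of_nonneg_left h7 (le_of_lt (inv_pos.mpr hpos))
    rw [smul_smul, smul_smul, inv_mul_cancel₀ hpos.ne', one_smul, inv_mul_eq_div] at h8
    exact h8
  have hfin : c 1 ≤ c 0 := sub_nonpos.mp hd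
  simpa [hc, pow_one, pow_zero] using hfin

lemma key_norm (T : U →L[ℂ] U) (hT : ∀ x y : U, (inner A (T x) y : A) = inner A x (T y)) (x : U) :
    (inner A (T x) (T x) : A) ≤ (‖T‖ ^ 2) • inner A x x := by
  rcases eq_or_ne T 0 with rfl | hT0
  · simp
  · have hn : 0 < ‖T‖ := norm_pos_iff.mpr hT0
    set S := ‖T‖⁻¹ • T with hS
    have hSsa : ∀ x y : U, (inner A (S x) y : A) = inner A x (S y) := by
      intro x y
      simp only [hS, ContinuousLinearMap.smul_apply, CStarModuleOld.inner_smul_left_real,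
        CStarModuleOld.inner_smul_right_real, hT]
    have hSn : ‖S‖ ≤ 1 := by
      refine ContinuousLinearMap.opNorm_le_bound _ zero_le_one fun y => ?_
      rw [one_mul, hS]
      simp only [ContinuousLinearMap.smul_apply]
      rw [norm_smul, norm_inv, norm_norm]
      calc ‖T‖⁻¹ * ‖T y‖ ≤ ‖T‖⁻¹ * (‖T‖ * ‖y‖) := by gcongr; exact T.le_opNorm y
      _ = ‖y‖ := by field_simp
    have h1 := key_contract S hSsa hSn x
    have h2 : (inner A (S x) (S x) : A) = (‖T‖⁻¹ * ‖T‖⁻¹) • inner A (T x) (T x) := by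
      simp only [hS, ContinuousLinearMap.smul_apply, CStarModuleOld.inner_smul_left_real,
        CStarModuleOld.inner_smul_right_real, smul_smul]
    rw [h2] at h1
    have h3 := smul_le_smul_of_nonneg_left h1 (by positivity : (0 : ℝ) ≤ ‖T‖ ^ 2)
    rw [smul_smul, show ‖T‖ ^ 2 * (‖T‖⁻¹ * ‖T‖⁻¹) = 1 by rw [sq]; field_simp, one_smul] at h3
    exact h3

lemma sandwich (T S : U →L[ℂ] U)
    (hT : ∀ x y : U, (inner A (T x) y : A) = inner A x (T y))
    (hS : ∀ x y : U, (inner A (S x) y : A) = inner A x (S y))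
    (hST : ∀ z : U, S (T z) = z)
    (A₀ B₀ : Aˣ) (x : U) (I : A)
    (hl : (A₀ : A) * (inner A (T x) (T x) : A) * star (A₀ : A) ≤ I)
    (hu : I ≤ (B₀ : A) * (inner A (T x) (T x) : A) * star (B₀ : A)) :
    (‖S‖⁻¹ • (A₀ : A)) * (inner A x x : A) * star (‖S‖⁻¹ • (A₀ : A)) ≤ I ∧
      I ≤ (‖T‖ • (B₀ : A)) * (inner A x x : A) * star (‖T‖ • (B₀ : A)) := by
  constructor
  · rcases eq_or_ne S 0 with rfl | hS0
    · have hx : x = 0 := by simpa using (hST x).symm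
      rw [hx] at hl ⊢
      simp only [map_zero, CStarModuleOld.inner_zero_left, mul_zero, zero_mul] at hl ⊢
      exact hl
    · have hn : 0 < ‖S‖ := norm_pos_iff.mpr hS0
      have hxx : (inner A x x : A) ≤ (‖S‖ ^ 2) • inner A (T x) (T x) := by
        have := key_norm S hS (T x)
        rwa [hST x] at this
      have h1 : (‖S‖⁻¹ * ‖S‖⁻¹) • (inner A x x : A) ≤ inner A (T x) (T x) := by
        have h2 := smul_le_smul_of_nonneg_left hxx
          (by positivity : (0 : ℝ) ≤ ‖S‖⁻¹ * ‖S‖⁻¹)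
        rwa [smul_smul, show ‖S‖⁻¹ * ‖S‖⁻¹ * ‖S‖ ^ 2 = 1 by rw [sq]; field_simp, one_smul] at h2
      have h3 := star_right_conjugate_le_conjugate h1 (A₀ : A)
      have heq : (‖S‖⁻¹ • (A₀ : A)) * (inner A x x : A) * star (‖S‖⁻¹ • (A₀ : A))
          = (A₀ : A) * ((‖S‖⁻¹ * ‖S‖⁻¹) • (inner A x x : A)) * star (A₀ : A) := by
        simp only [star_smul, star_trivial, smul_mul_assoc, mul_smul_comm, smul_smul]
      rw [heq]
      exact h3.trans hl
  · have hxx : (inner A (T x) (T x) : A) ≤ (‖T‖ ^ 2) • inner A x x := key_norm T hT x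
    have h3 := star_right_conjugate_le_conjugate hxx (B₀ : A)
    have heq : (‖T‖ • (B₀ : A)) * (inner A x x : A) * star (‖T‖ • (B₀ : A))
        = (B₀ : A) * ((‖T‖ ^ 2) • (inner A x x : A)) * star (B₀ : A) := by
      simp only [star_smul, star_trivial, smul_mul_assoc, mul_smul_comm, smul_smul, pow_two]
    rw [heq]
    exact hu.trans h3

end Helpers

theorem stmt7 {A : Type*} [CStarAlgebra A] [PartialOrder A] [StarOrderedRing A]
    {U : Type*} [NormedAddCommGroup U] [NormedSpace ℂ U] [SMul Aᵐᵒᵖ U] [CStarModuleOld A U]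
    {Ω : Type*} [MeasurableSpace Ω] (μ : Measure Ω)
    {V : Ω → Type*} [∀ w, NormedAddCommGroup (V w)] [∀ w, NormedSpace ℂ (V w)]
    [∀ w, SMul Aᵐᵒᵖ (V w)] [∀ w, CStarModuleOld A (V w)]
    (Λ : ∀ w, U →L[ℂ] V w)
    (C Cinv : U →L[ℂ] U)
    (hCinv : C.comp Cinv = ContinuousLinearMap.id ℂ U ∧ Cinv.comp C = ContinuousLinearMap.id ℂ U)
    (hCsa : ∀ x y : U, (inner A (C x) y : A) = inner A x (C y))
    (hCpos : ∀ x : U, (0 : A) ≤ inner A (C x) x) :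
    ((∀ A₀ B₀ : Aˣ,
        (∀ x : U,
          (A₀ : A) * (inner A x x : A) * star (A₀ : A) ≤ ∫ w, (inner A (Λ w x) (Λ w x) : A) ∂μ ∧
          (∫ w, (inner A (Λ w x) (Λ w x) : A) ∂μ) ≤ (B₀ : A) * (inner A x x : A) * star (B₀ : A)) →
        ∀ x : U,
          (‖Cinv‖⁻¹ • (A₀ : A)) * (inner A x x : A) * star (‖Cinv‖⁻¹ • (A₀ : A)) ≤
            (∫ w, (inner A (Λ w (C x)) (Λ w (C x)) : A) ∂μ) ∧
          (∫ w, (inner A (Λ w (C x)) (Λ w (C x)) : A) ∂μ) ≤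
            (‖C‖ • (B₀ : A)) * (inner A x x : A) * star (‖C‖ • (B₀ : A))) ∧
     (∀ A₀ B₀ : Aˣ,
        (∀ x : U,
          (A₀ : A) * (inner A x x : A) * star (A₀ : A) ≤
            (∫ w, (inner A (Λ w (C x)) (Λ w (C x)) : A) ∂μ) ∧
          (∫ w, (inner A (Λ w (C x)) (Λ w (C x)) : A) ∂μ) ≤
            (B₀ : A) * (inner A x x : A) * star (B₀ : A)) →
        ∀ x : U,
          (‖C‖⁻¹ • (A₀ : A)) * (inner A x x : A) * star (‖C‖⁻¹ • (A₀ : A)) ≤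
            (∫ w, (inner A (Λ w x) (Λ w x) : A) ∂μ) ∧
          (∫ w, (inner A (Λ w x) (Λ w x) : A) ∂μ) ≤
            (‖Cinv‖ • (B₀ : A)) * (inner A x x : A) * star (‖Cinv‖ • (B₀ : A)))) := by
  have h1 : ∀ z : U, C (Cinv z) = z := fun z => by
    simpa using ContinuousLinearMap.ext_iff.mp hCinv.1 z
  have h2 : ∀ z : U, Cinv (C z) = z := fun z => by
    simpa using ContinuousLinearMap.ext_iff.mp hCinv.2 z
  have hCsa' : ∀ x y : U, (inner A (Cinv x) y : A) = inner A x (Cinv y) := by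
    intro x y
    calc (inner A (Cinv x) y : A) = inner A (Cinv x) (C (Cinv y)) := by rw [h1]
    _ = inner A (C (Cinv x)) (Cinv y) := (hCsa _ _).symm
    _ = inner A x (Cinv y) := by rw [h1]
  refine ⟨?_, ?_⟩
  · intro A₀ B₀ h x
    exact sandwich C Cinv hCsa hCsa' h2 A₀ B₀ x _ (h (C x)).1 (h (C x)).2
  · intro A₀ B₀ h x
    have hx := h (Cinv x)
    simp only [h1] at hx
    exact sandwich Cinv C hCsa' hCsa h1 A₀ B₀ x _ hx.1 hx.2
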